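/- Let $g : [0,1] \to (0, \infty)$ be defined by $g(t) = (\sigma^2 - 1)t + 1$ for a constant $\sigma > 0$, and let $0 < t_0 < t_1 < \cdots < t_N = 1$ with $h_i = t_{i+1} - t_i$. Suppose $(\mu_i)_{i=0}^N \subset \mathbb{R}^d$ satisfies $\mu_{i+1} = \frac{g(t_{i+1})}{g(t_i)} \mu_i + \frac{h_i}{g(t_i)} \mu$ for a fixed $\mu \in \mathbb{R}^d$, with $\mu_0 = t_0 \hat{\mu}$ for some $\hat{\mu} \in \mathbb{R}^d$. Then $\mu_N - \mu = \frac{\sigma^2 t_0}{g(t_0)}(\hat{\mu} - \mu)$. -/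

import Mathlib

theorem stmt12 {d : ℕ} (σ : ℝ) (hσ : 0 < σ) (N : ℕ) (hN : 1 ≤ N)
    (t : ℕ → ℝ) (ht0 : 0 < t 0) (hmono : ∀ i < N, t i < t (i + 1)) (htN : t N = 1)
    (μ μhat : EuclideanSpace ℝ (Fin d)) (μseq : ℕ → EuclideanSpace ℝ (Fin d))
    (g : ℝ → ℝ) (hg : ∀ u, g u = (σ ^ 2 - 1) * u + 1)
    (h0 : μseq 0 = t 0 • μhat)
    (hrec : ∀ i < N, μseq (i + 1)
      = (g (t (i + 1)) / g (t i)) • μseq i + ((t (i + 1) - t i) / g (t i)) • μ) :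
    μseq N - μ = (σ ^ 2 * t 0 / g (t 0)) • (μhat - μ) := by
  -- t is monotone up to N
  have hmono' : ∀ i ≤ N, ∀ j ≤ N, i ≤ j → t i ≤ t j := by
    intro i hi j hj hij
    induction j with
    | zero => simp [Nat.le_zero.mp hij]
    | succ k ih =>
      rcases Nat.lt_or_ge i (k+1) with h | h
      · have hk : k < N := by omega
        have := hmono k hk
        have := ih (by omega) (by omega)
        linarith
      · have : i = k + 1 := by omega
        simp [this]
  have hpos : ∀ i ≤ N, 0 < t i := by
    intro i hi
    calc (0:ℝ) < t 0 := ht0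
    _ ≤ t i := hmono' 0 (by omega) i hi (by omega)
  have hle1 : ∀ i ≤ N, t i ≤ 1 := by
    intro i hi
    have := hmono' i hi N le_rfl hi
    linarith [htN ▸ this]
  have hgpos : ∀ i ≤ N, 0 < g (t i) := by
    intro i hi
    rw [hg]
    have h1 := hpos i hi
    have h2 := hle1 i hi
    nlinarith [sq_nonneg σ, mul_pos (mul_pos hσ hσ) h1]
  have key : ∀ i ≤ N, μseq i = (g (t i) / g (t 0)) • μseq 0 + ((t i - t 0) / g (t 0)) • μ := by
    intro i hi
    induction i with
    | zero =>
      have := (hgpos 0 (by omega)).ne'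
      rw [div_self this]
      simp
    | succ k ih =>
      have hk : k < N := by omega
      have hgk := (hgpos k (by omega)).ne'
      have hg0 := (hgpos 0 (by omega)).ne'
      have hcoef : g (t (k+1)) * (t k - t 0) + (t (k+1) - t k) * g (t 0)
          = (t (k+1) - t 0) * g (t k) := by
        rw [hg, hg, hg]; ring
      rw [hrec k hk, ih (by omega)]
      match_scalars
      · field_simp
      · have hgk' : (σ ^ 2 - 1) * t k + 1 ≠ 0 := by rw [← hg]; exact hgk
        have hg0' : (σ ^ 2 - 1) * t 0 + 1 ≠ 0 := by rw [← hg]; exact hg0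
        simp only [hg]
        field_simp
        ring
  have hfin := key N le_rfl
  rw [h0, htN] at hfin
  have hg0 := (hgpos 0 (by omega)).ne'
  have hg1 : g 1 = σ ^ 2 := by rw [hg]; ring
  have hgt0 : g (t 0) = (σ ^ 2 - 1) * t 0 + 1 := hg (t 0)
  rw [hfin, hg1]
  match_scalars
  · field_simp
  · have hg0' : (σ ^ 2 - 1) * t 0 + 1 ≠ 0 := by rw [← hg]; exact hg0
    simp only [hg]
    field_simp [show t 0 * (σ ^ 2 - 1) + 1 ≠ 0 by rw [mul_comm]; exact hg0']
    ring
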